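/- Let V and W be complex Banach spaces, let A : ℝ → (V →L[ℂ] V), B : ℝ → (W →L[ℂ] V), C : ℝ → (V →L[ℂ] W), D : ℝ → (W →L[ℂ] W) be families of bounded operators, and let G₀ ∈ V →L[ℂ] W be given initial data. Suppose Q : [0, ∞) → (V →L[ℂ] V) and P : [0, ∞) → (V →L[ℂ] W) satisfy, for every t ≥ 0, HasDerivAt Q (A t ∘ Q t + B t ∘ P t) t and HasDerivAt P (C t ∘ Q t + D t ∘ P t) t (derivatives in operator norm), with Q 0 = id and P 0 = G₀. Then there exists T > 0 such that Q t is invertible in V →L[ℂ] V for all t ∈ [0, T), and G : t ↦ P t ∘ (Q t)⁻¹ satisfies G 0 = G₀ and, for every t ∈ [0, T), HasDerivAt G (C t + D t ∘ G t - G t ∘ (A t + B t ∘ G t)) t. -/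

import Mathlib

private lemma comp_isBoundedBilinearMap_real
    {V W : Type*} [NormedAddCommGroup V] [NormedSpace ℂ V]
    [NormedAddCommGroup W] [NormedSpace ℂ W] :
    IsBoundedBilinearMap ℝ
      (fun p : (V →L[ℂ] W) × (V →L[ℂ] V) => p.1.comp p.2) where
  add_left f f' g := ContinuousLinearMap.add_comp f f' g
  smul_left r f g := by ext v; simp
  add_right f g g' := ContinuousLinearMap.comp_add f g g'
  smul_right r f g := by ext v; simp
  bound := ⟨1, one_pos, fun f g => by simpa using ContinuousLinearMap.opNorm_comp_le f g⟩

/-- Operator version of the inverse problem: given a solution of the linear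
base and auxiliary operator equations `∂ₜQ = A∘Q + B∘P`, `∂ₜP = C∘Q + D∘P`
with data `Q 0 = id`, `P 0 = G₀`, there is a `T > 0` on which `Q t` is
invertible and `G = P ∘ Q⁻¹` solves the operator Riccati evolution equation
`∂ₜG = C + D∘G − G∘(A + B∘G)` with `G 0 = G₀`. -/
theorem operator_riccati_solution_from_linear_data
    {V W : Type*} [NormedAddCommGroup V] [NormedSpace ℂ V] [CompleteSpace V]
    [NormedAddCommGroup W] [NormedSpace ℂ W] [CompleteSpace W]
    (A : ℝ → V →L[ℂ] V) (B : ℝ → W →L[ℂ] V)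
    (C : ℝ → V →L[ℂ] W) (D : ℝ → W →L[ℂ] W)
    (G₀ : V →L[ℂ] W)
    (Q : ℝ → V →L[ℂ] V) (P : ℝ → V →L[ℂ] W)
    (hQ : ∀ t : ℝ, 0 ≤ t → HasDerivAt Q ((A t).comp (Q t) + (B t).comp (P t)) t)
    (hP : ∀ t : ℝ, 0 ≤ t → HasDerivAt P ((C t).comp (Q t) + (D t).comp (P t)) t)
    (hQ0 : Q 0 = ContinuousLinearMap.id ℂ V) (hP0 : P 0 = G₀) :
    ∃ T : ℝ, 0 < T ∧
      (∀ t ∈ Set.Ico (0 : ℝ) T, IsUnit (Q t)) ∧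
      (P 0).comp (Ring.inverse (Q 0)) = G₀ ∧
      ∀ t ∈ Set.Ico (0 : ℝ) T,
        HasDerivAt (fun s => (P s).comp (Ring.inverse (Q s)))
          (C t + (D t).comp ((P t).comp (Ring.inverse (Q t)))
            - ((P t).comp (Ring.inverse (Q t))).comp
                (A t + (B t).comp ((P t).comp (Ring.inverse (Q t))))) t := by
  -- `Q` is continuous at `0` and `Q 0 = 1` is a unit; units form an open set.
  have hcont : ContinuousAt Q 0 := (hQ 0 le_rfl).continuousAt
  have hunit0 : IsUnit (Q 0) := by
    rw [hQ0, show (ContinuousLinearMap.id ℂ V) = (1 : V →L[ℂ] V) from rfl]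
    exact isUnit_one
  have hmem : {x : V →L[ℂ] V | IsUnit x} ∈ nhds (Q 0) :=
    Units.isOpen.mem_nhds hunit0
  have hmem' : Q ⁻¹' {x : V →L[ℂ] V | IsUnit x} ∈ nhds (0 : ℝ) := hcont.preimage_mem_nhds hmem
  obtain ⟨T, hT, hball⟩ := Metric.mem_nhds_iff.mp hmem'
  have hunitIco : ∀ t ∈ Set.Ico (0 : ℝ) T, IsUnit (Q t) := by
    intro t ht
    exact hball (by rw [Metric.mem_ball, Real.dist_eq, sub_zero, abs_of_nonneg ht.1]; exact ht.2)
  refine ⟨T, hT, hunitIco, ?_, ?_⟩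
  · rw [hQ0, hP0, show (ContinuousLinearMap.id ℂ V) = (1 : V →L[ℂ] V) from rfl,
      Ring.inverse_one]
    exact ContinuousLinearMap.comp_id G₀
  · intro t ht
    have hu : IsUnit (Q t) := hunitIco t ht
    -- derivative of `Ring.inverse ∘ Q`
    have hR : HasDerivAt (fun s => Ring.inverse (Q s))
        (-(Ring.inverse (Q t) * ((A t).comp (Q t) + (B t).comp (P t)) * Ring.inverse (Q t))) t := by
      have h := ((hasFDerivAt_ringInverse (𝕜 := ℂ) hu.unit).restrictScalars ℝ).comp_hasDerivAt t (hQ t ht.1)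
      refine HasDerivAt.congr_deriv h (Eq.symm ?_)
      simp [ContinuousLinearMap.mulLeftRight_apply, ← Ring.inverse_unit hu.unit, hu.unit_spec,
        mul_assoc]
    have hG := ((comp_isBoundedBilinearMap_real.hasFDerivAt
        ((P t), Ring.inverse (Q t))).comp_hasDerivAt t ((hP t ht.1).prodMk hR))
    simp only [IsBoundedBilinearMap.deriv_apply] at hG
    refine HasDerivAt.congr_deriv hG (Eq.symm ?_)
    have hQR : ∀ v, Q t (Ring.inverse (Q t) v) = v := by
      intro v
      have : Q t * Ring.inverse (Q t) = 1 := Ring.mul_inverse_cancel _ hu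
      calc Q t (Ring.inverse (Q t) v) = (Q t * Ring.inverse (Q t)) v := rfl
        _ = v := by rw [this]; rfl
    ext v
    simp [ContinuousLinearMap.mul_apply, hQR, map_add, sub_eq_add_neg, add_assoc]
    abel
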